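/- Let F be a field and let A and B be unital locally matrix F-algebras, regarded as structures in the first-order language of rings via their ring structures. Then A and B satisfy exactly the same universal sentences of the language of rings if and only if D(A) = D(B). -/

import Mathlib

open FirstOrder FirstOrder.Ring

/-- `D(A)`: the set of positive integers `n` such that `A` contains a unital subalgebra
isomorphic to the `n × n` matrix algebra over `F`. -/
def matrixDegreeSet (F : Type*) [Field F] (A : Type*) [Ring A] [Algebra F A] : Set ℕ :=
  {n | 0 < n ∧ ∃ S : Subalgebra F A, Nonempty (S ≃ₐ[F] Matrix (Fin n) (Fin n) F)}

/-- A unital `F`-algebra is a locally matrix algebra if every finite subset lies in a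
unital subalgebra isomorphic to a matrix algebra `M_n(F)`, `n ≥ 1`. -/
def IsLocallyMatrixAlgebra (F : Type*) [Field F] (A : Type*) [Ring A] [Algebra F A] : Prop :=
  ∀ s : Finset A, ∃ (n : ℕ) (S : Subalgebra F A), 0 < n ∧ (s : Set A) ⊆ S ∧
    Nonempty (S ≃ₐ[F] Matrix (Fin n) (Fin n) F)

/-- A universal sentence in the first-order language of rings: a sentence of the form
`∀ x₁ … ∀ xₘ, φ` with `φ` quantifier-free. -/
def IsUniversalRingSentence (σ : Language.ring.Sentence) : Prop :=
  ∃ (m : ℕ) (φ : Language.ring.BoundedFormula Empty m), φ.IsQF ∧ σ = φ.alls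

namespace LMAux

open FirstOrder.Language

/-- A system of `n × n` matrix units in a ring. -/
def IsMU (A : Type*) [Ring A] (n : ℕ) (e : Fin n → Fin n → A) : Prop :=
  (∀ i j k l, e i j * e k l = if j = k then e i l else 0) ∧ (∑ i, e i i = 1)

lemma sum_diag_stdBasisMatrix (F : Type*) [Field F] (n : ℕ) :
    (∑ i : Fin n, Matrix.single i i (1 : F)) = 1 := by
  ext a b
  rw [Matrix.sum_apply]
  simp [Matrix.single, Matrix.one_apply, ite_and, Finset.sum_ite_eq, eq_comm]

lemma mu_of_subalg {F A : Type*} [Field F] [Ring A] [Algebra F A] {n : ℕ}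
    (S : Subalgebra F A) (g : S ≃ₐ[F] Matrix (Fin n) (Fin n) F) :
    ∃ e : Fin n → Fin n → A, IsMU A n e := by
  classical
  refine ⟨fun i j => (g.symm (Matrix.single i j 1) : A), ?_, ?_⟩
  · intro i j k l
    by_cases h : j = k
    · subst h
      rw [if_pos rfl, ← MulMemClass.coe_mul, ← map_mul, Matrix.single_mul_single_same, one_mul]
    · rw [if_neg h, ← MulMemClass.coe_mul, ← map_mul, Matrix.single_mul_single_of_ne (h := h),
        map_zero, ZeroMemClass.coe_zero]
  · rw [← AddSubmonoidClass.coe_finset_sum, ← map_sum, sum_diag_stdBasisMatrix, map_one,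
      OneMemClass.coe_one]

lemma subalg_of_mu {F A : Type*} [Field F] [Ring A] [Algebra F A] [Nontrivial A] {n : ℕ}
    (hn : 0 < n) {e : Fin n → Fin n → A} (he : IsMU A n e) :
    ∃ S : Subalgebra F A, Nonempty (S ≃ₐ[F] Matrix (Fin n) (Fin n) F) := by
  classical
  obtain ⟨he1, he2⟩ := he
  haveI : Nonempty (Fin n) := Fin.pos_iff_nonempty.mp hn
  have hone : (∑ i : Fin n, ∑ j : Fin n, (1 : Matrix (Fin n) (Fin n) F) i j • e i j) = 1 := by
    calc (∑ i : Fin n, ∑ j : Fin n, (1 : Matrix (Fin n) (Fin n) F) i j • e i j)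
        = ∑ i : Fin n, e i i := by
          refine Finset.sum_congr rfl fun i _ => ?_
          rw [Finset.sum_eq_single i]
          · simp [Matrix.one_apply]
          · intro j _ hj; simp [Matrix.one_apply, Ne.symm hj]
          · simp
      _ = 1 := he2
  let φ : Matrix (Fin n) (Fin n) F →ₐ[F] A :=
  { toFun := fun M => ∑ i, ∑ j, M i j • e i j
    map_one' := hone
    map_mul' := by
      intro M N
      calc ∑ i, ∑ l, (M * N) i l • e i l
          = ∑ i, ∑ l, ∑ j, (M i j * N j l) • e i l := by
            refine Finset.sum_congr rfl fun i _ => Finset.sum_congr rfl fun l _ => ?_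
            rw [Matrix.mul_apply, Finset.sum_smul]
        _ = ∑ i, ∑ j, ∑ l, (M i j * N j l) • e i l := by
            refine Finset.sum_congr rfl fun i _ => ?_
            rw [Finset.sum_comm]
        _ = ∑ i, ∑ j, ∑ k, ∑ l, (M i j * N k l) • (e i j * e k l) := by
            refine Finset.sum_congr rfl fun i _ => Finset.sum_congr rfl fun j _ => ?_
            rw [Finset.sum_comm]
            refine Finset.sum_congr rfl fun l _ => ?_
            rw [Finset.sum_eq_single j]
            · rw [he1, if_pos rfl]
            · intro k _ hk; rw [he1, if_neg (Ne.symm hk), smul_zero]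
            · simp
        _ = (∑ i, ∑ j, M i j • e i j) * (∑ k, ∑ l, N k l • e k l) := by
            rw [Finset.sum_mul]
            refine Finset.sum_congr rfl fun i _ => ?_
            rw [Finset.sum_mul]
            refine Finset.sum_congr rfl fun j _ => ?_
            rw [Finset.mul_sum]
            refine Finset.sum_congr rfl fun k _ => ?_
            rw [Finset.mul_sum]
            refine Finset.sum_congr rfl fun l _ => ?_
            rw [smul_mul_smul_comm]
    map_zero' := by simp
    map_add' := by
      intro M N
      simp [Matrix.add_apply, add_smul, Finset.sum_add_distrib]
    commutes' := by
      intro c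
      rw [Algebra.algebraMap_eq_smul_one (A := Matrix (Fin n) (Fin n) F),
        Algebra.algebraMap_eq_smul_one (A := A)]
      calc ∑ i, ∑ j, ((c • (1 : Matrix (Fin n) (Fin n) F)) i j) • e i j
          = c • ∑ i, ∑ j, (1 : Matrix (Fin n) (Fin n) F) i j • e i j := by
            rw [Finset.smul_sum]
            refine Finset.sum_congr rfl fun i _ => ?_
            rw [Finset.smul_sum]
            refine Finset.sum_congr rfl fun j _ => ?_
            rw [Matrix.smul_apply, smul_assoc]
        _ = c • (1 : A) := by rw [hone] }
  have hinj : Function.Injective φ := RingHom.injective (φ.toRingHom)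
  exact ⟨φ.range, ⟨(AlgEquiv.ofInjective φ hinj).symm⟩⟩

lemma nontrivial_of_lma {F A : Type*} [Field F] [Ring A] [Algebra F A]
    (hA : IsLocallyMatrixAlgebra F A) : Nontrivial A := by
  obtain ⟨n, S, hn, -, ⟨g⟩⟩ := hA ∅
  haveI : Nonempty (Fin n) := Fin.pos_iff_nonempty.mp hn
  haveI hS : Nontrivial ↥S := g.toEquiv.nontrivial
  obtain ⟨x, y, hxy⟩ := hS
  exact ⟨x, y, fun h => hxy (Subtype.ext h)⟩

noncomputable section

/-- variable term for the `(i,j)` matrix unit -/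
def X (n : ℕ) (i j : Fin n) : Language.ring.Term (Empty ⊕ Fin (n * n)) :=
  Term.var (Sum.inr (finProdFinEquiv (i, j)))

open Classical in
def muRelFormula (n : ℕ) : Language.ring.BoundedFormula Empty (n * n) :=
  BoundedFormula.iInf (fun p : (Fin n × Fin n) × (Fin n × Fin n) =>
    Term.bdEqual (X n p.1.1 p.1.2 * X n p.2.1 p.2.2)
      (if p.1.2 = p.2.1 then X n p.1.1 p.2.2 else 0))

def muSumTerm (n : ℕ) : Language.ring.Term (Empty ⊕ Fin (n * n)) :=
  ((List.finRange n).map (fun i => X n i i)).foldr (· + ·) 0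

open Classical in
def muFormula (n : ℕ) : Language.ring.BoundedFormula Empty (n * n) :=
  muRelFormula n ⊓ Term.bdEqual (muSumTerm n) 1

def muSentence (n : ℕ) : Language.ring.Sentence := (muFormula n).not.alls

lemma isQF_foldr_inf {L : Language} {α : Type*} {n : ℕ} (l : List (L.BoundedFormula α n))
    (h : ∀ φ ∈ l, φ.IsQF) : (l.foldr (· ⊓ ·) ⊤).IsQF := by
  induction l with
  | nil => exact BoundedFormula.IsQF.top
  | cons a l ih =>
    exact (h a (by simp)).inf (ih fun φ hφ => h φ (List.mem_cons_of_mem _ hφ))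

lemma muFormula_isQF (n : ℕ) : (muFormula n).IsQF := by
  refine BoundedFormula.IsQF.inf ?_ ((BoundedFormula.IsAtomic.equal _ _).isQF)
  rw [muRelFormula, BoundedFormula.iInf]
  refine isQF_foldr_inf _ ?_
  intro φ hφ
  simp only [List.mem_map] at hφ
  obtain ⟨p, -, rfl⟩ := hφ
  exact (BoundedFormula.IsAtomic.equal _ _).isQF

lemma muSentence_universal (n : ℕ) : IsUniversalRingSentence (muSentence n) :=
  ⟨n * n, (muFormula n).not, (muFormula_isQF n).not, rfl⟩

variable {R : Type*} [Ring R] [CompatibleRing R]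

lemma realize_foldr_add {α : Type*} (l : List (Language.ring.Term α)) (v : α → R) :
    (l.foldr (· + ·) 0).realize v = (l.map (Term.realize v)).sum := by
  induction l with
  | nil => simp
  | cons a l ih => simp [ih]

lemma realize_muFormula (n : ℕ) (xs : Fin (n * n) → R) :
    (muFormula n).Realize (default : Empty → R) xs ↔
      IsMU R n (fun i j => xs (finProdFinEquiv (i, j))) := by
  classical
  rw [muFormula, BoundedFormula.realize_inf, IsMU]
  apply and_congr
  · rw [muRelFormula, BoundedFormula.realize_iInf]
    constructor
    · intro h i j k l
      have := h ((i, j), (k, l))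
      rw [BoundedFormula.realize_bdEqual] at this
      simpa [X, apply_ite (Term.realize (Sum.elim (default : Empty → R) xs))] using this
    · rintro h ⟨⟨i, j⟩, ⟨k, l⟩⟩
      rw [BoundedFormula.realize_bdEqual]
      simpa [X, apply_ite (Term.realize (Sum.elim (default : Empty → R) xs))] using h i j k l
  · rw [BoundedFormula.realize_bdEqual]
    have : Term.realize (Sum.elim (default : Empty → R) xs) (muSumTerm n)
        = ∑ i : Fin n, xs (finProdFinEquiv (i, i)) := by
      rw [muSumTerm, realize_foldr_add, List.map_map, Fin.sum_univ_def]
      rfl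
    rw [this, realize_one]

lemma realize_muSentence (n : ℕ) :
    (R ⊨ muSentence n) ↔ ¬ ∃ e : Fin n → Fin n → R, IsMU R n e := by
  rw [muSentence]
  simp only [Sentence.Realize, BoundedFormula.realize_alls, BoundedFormula.realize_not]
  constructor
  · rintro h ⟨e, he⟩
    refine h (fun v => e (finProdFinEquiv.symm v).1 (finProdFinEquiv.symm v).2) ?_
    rw [realize_muFormula]
    have : (fun i j => (fun v => e (finProdFinEquiv.symm v).1 (finProdFinEquiv.symm v).2)
        (finProdFinEquiv (i, j))) = e := by
      funext i j
      simp
    rw [this]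
    exact he
  · intro h xs hxs
    exact h ⟨_, (realize_muFormula n xs).1 hxs⟩

/-- An injective ring hom as an embedding in the language of rings. -/
def ringEmb {R S : Type*} [Ring R] [Ring S] [CompatibleRing R] [CompatibleRing S]
    (f : R →+* S) (hf : Function.Injective f) : Language.ring.Embedding R S where
  toFun := f
  inj' := hf
  map_fun' := by
    intro k g x
    cases g <;> simp [CompatibleRing.funMap_add, CompatibleRing.funMap_mul,
      CompatibleRing.funMap_neg, CompatibleRing.funMap_zero, CompatibleRing.funMap_one]
  map_rel' := by intro k r; cases r

lemma transfer {F A B : Type*} [Field F] [Ring A] [Algebra F A] [Ring B] [Algebra F B]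
    [CompatibleRing A] [CompatibleRing B]
    (hA : IsLocallyMatrixAlgebra F A)
    (hD : matrixDegreeSet F A ⊆ matrixDegreeSet F B)
    {m : ℕ} {φ : Language.ring.BoundedFormula Empty m} (hφ : φ.IsQF)
    (hB : B ⊨ φ.alls) : A ⊨ φ.alls := by
  classical
  rw [Sentence.Realize, BoundedFormula.realize_alls] at hB ⊢
  intro xs
  obtain ⟨n, S, hn, hsub, ⟨g⟩⟩ := hA (Finset.image xs Finset.univ)
  have hmem : n ∈ matrixDegreeSet F A := ⟨hn, S, ⟨g⟩⟩
  obtain ⟨-, T, ⟨h⟩⟩ := hD hmem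
  letI := compatibleRingOfRing (↥S)
  let j : S ≃ₐ[F] T := g.trans h.symm
  let f : ↥S →+* B := ((Subalgebra.val T).comp j.toAlgHom).toRingHom
  have hfinj : Function.Injective f := Subtype.coe_injective.comp j.injective
  let ι : ↥S →+* A := (Subalgebra.val S).toRingHom
  have hiinj : Function.Injective ι := Subtype.coe_injective
  let xs' : Fin m → ↥S := fun i =>
    ⟨xs i, hsub (Finset.mem_coe.2 (Finset.mem_image_of_mem xs (Finset.mem_univ i)))⟩
  have h1 := hB ((ringEmb f hfinj) ∘ xs')
  rw [show (default : Empty → B) = (ringEmb f hfinj) ∘ (default : Empty → ↥S) by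
        funext x; exact x.elim] at h1
  rw [hφ.realize_embedding (ringEmb f hfinj)] at h1
  have h2 : xs = (ringEmb ι hiinj) ∘ xs' := funext fun i => rfl
  rw [h2, show (default : Empty → A) = (ringEmb ι hiinj) ∘ (default : Empty → ↥S) by
        funext x; exact x.elim, hφ.realize_embedding (ringEmb ι hiinj)]
  exact h1

end

end LMAux

open LMAux in
theorem stmt_4 (F : Type*) [Field F] (A B : Type*) [Ring A] [Algebra F A]
    [Ring B] [Algebra F B]
    (hA : IsLocallyMatrixAlgebra F A) (hB : IsLocallyMatrixAlgebra F B) :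
    (∀ σ : Language.ring.Sentence, IsUniversalRingSentence σ →
        (@FirstOrder.Language.Sentence.Realize Language.ring A
            (compatibleRingOfRing A).toStructure σ ↔
          @FirstOrder.Language.Sentence.Realize Language.ring B
            (compatibleRingOfRing B).toStructure σ)) ↔
      matrixDegreeSet F A = matrixDegreeSet F B := by
  letI := compatibleRingOfRing A
  letI := compatibleRingOfRing B
  haveI : Nontrivial A := nontrivial_of_lma hA
  haveI : Nontrivial B := nontrivial_of_lma hB
  constructor
  · intro h
    ext n
    simp only [matrixDegreeSet, Set.mem_setOf_eq]
    constructor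
    · rintro ⟨hn, S, ⟨g⟩⟩
      refine ⟨hn, ?_⟩
      have hAe : ∃ e : Fin n → Fin n → A, IsMU A n e := mu_of_subalg S g
      have hnotA : ¬ (A ⊨ muSentence n) := fun hs => (realize_muSentence n).1 hs hAe
      rw [h (muSentence n) (muSentence_universal n)] at hnotA
      have hBe : ∃ e : Fin n → Fin n → B, IsMU B n e := by
        by_contra hc
        exact hnotA ((realize_muSentence n).2 hc)
      obtain ⟨e, he⟩ := hBe
      exact subalg_of_mu hn he
    · rintro ⟨hn, S, ⟨g⟩⟩
      refine ⟨hn, ?_⟩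
      have hBe : ∃ e : Fin n → Fin n → B, IsMU B n e := mu_of_subalg S g
      have hnotB : ¬ (B ⊨ muSentence n) := fun hs => (realize_muSentence n).1 hs hBe
      rw [← h (muSentence n) (muSentence_universal n)] at hnotB
      have hAe : ∃ e : Fin n → Fin n → A, IsMU A n e := by
        by_contra hc
        exact hnotB ((realize_muSentence n).2 hc)
      obtain ⟨e, he⟩ := hAe
      exact subalg_of_mu hn he
  · intro hD σ hσ
    obtain ⟨m, φ, hqf, rfl⟩ := hσ
    exact ⟨transfer hB hD.symm.subset hqf, transfer hA hD.subset hqf⟩
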